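/- The de Finetti state ζ^n_{AR} = ∫ σ_{AR}^{⊗n} d(σ_{AR}), where the integral is over pure states on H_A ⊗ H_R (H_R ≅ H_A, dim H_A = d) with respect to the measure induced by the Haar measure on the unitary group, can be written as a finite convex combination ζ^n_{AR} = Σ_{i=1}^N p_i (ω^i_{AR})^{⊗n} of n-fold tensor powers of pure states ω^i_{AR} on H_A ⊗ H_R, with N ≤ (n+1)^{2d²−2} terms. -/

import Mathlib

open Matrix Kronecker BigOperators
open scoped ComplexOrder

noncomputable section
attribute [local instance] Classical.propDecidable

/-- Square root of a positive semidefinite matrix (junk value `0` otherwise). -/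
def msqrt {n : Type*} [Fintype n] [DecidableEq n] (ρ : Matrix n n ℂ) : Matrix n n ℂ :=
  if h : ρ.PosSemidef then
    (h.1.eigenvectorUnitary : Matrix n n ℂ) *
      Matrix.diagonal ((↑) ∘ (Real.sqrt ·) ∘ h.1.eigenvalues) *
      (star h.1.eigenvectorUnitary : Matrix n n ℂ)
  else 0

/-- The trace norm `‖M‖₁ = tr √(Mᴴ M)` of a (possibly rectangular) complex matrix. -/
def traceNorm {n m : Type*} [Fintype n] [Fintype m] [DecidableEq m] (M : Matrix n m ℂ) : ℝ :=
  (msqrt (Mᴴ * M)).trace.re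

/-- The Hilbert-Schmidt (Frobenius) norm of a complex matrix. -/
def frobNorm {n m : Type*} [Fintype n] [Fintype m] (M : Matrix n m ℂ) : ℝ :=
  Real.sqrt (∑ i, ∑ j, ‖M i j‖ ^ 2)

/-- A density operator: positive semidefinite with unit trace. -/
def IsDensity {n : Type*} [Fintype n] (ρ : Matrix n n ℂ) : Prop :=
  ρ.PosSemidef ∧ ρ.trace = 1

/-- The projector onto the support of a Hermitian matrix (junk value `0` otherwise). -/
def suppProj {n : Type*} [Fintype n] [DecidableEq n] (ρ : Matrix n n ℂ) : Matrix n n ℂ :=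
  if h : ρ.IsHermitian then
    (h.eigenvectorUnitary : Matrix n n ℂ) *
      Matrix.diagonal (fun i => if h.eigenvalues i = 0 then (0 : ℂ) else 1) *
      star (h.eigenvectorUnitary : Matrix n n ℂ)
  else 0

/-- The von Neumann entropy (base 2) of a Hermitian matrix (junk value `0` otherwise). -/
def vnEntropy {n : Type*} [Fintype n] [DecidableEq n] (ρ : Matrix n n ℂ) : ℝ :=
  if h : ρ.IsHermitian then -∑ i, h.eigenvalues i * Real.logb 2 (h.eigenvalues i) else 0

/-- Partial trace over the second tensor factor. -/
def ptr2 {X Y : Type*} [Fintype X] [Fintype Y] (ρ : Matrix (X × Y) (X × Y) ℂ) :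
    Matrix X X ℂ :=
  Matrix.of fun x x' => ∑ y, ρ (x, y) (x', y)

/-- Partial trace over the first tensor factor. -/
def ptr1 {X Y : Type*} [Fintype X] [Fintype Y] (ρ : Matrix (X × Y) (X × Y) ℂ) :
    Matrix Y Y ℂ :=
  Matrix.of fun y y' => ∑ x, ρ (x, y) (x, y')

/-- The rank-one projector `|ψ⟩⟨ψ|` associated to a vector `ψ`. -/
def pureMat {n : Type*} (ψ : n → ℂ) : Matrix n n ℂ :=
  Matrix.vecMulVec ψ (star ψ)

/-- `ψ` is a unit vector. -/
def IsUnit' {n : Type*} [Fintype n] (ψ : n → ℂ) : Prop := ∑ z, ‖ψ z‖ ^ 2 = 1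

/-- The binary entropy function with logarithms in base 2. -/
def binEnt (x : ℝ) : ℝ := -(x * Real.logb 2 x) - (1 - x) * Real.logb 2 (1 - x)

/-- The entanglement of formation of a bipartite state, as the infimum over pure-state
decompositions of the average entropy of entanglement. -/
def EoF {A B : Type*} [Fintype A] [Fintype B] [DecidableEq A]
    (ρ : Matrix (A × B) (A × B) ℂ) : ℝ :=
  sInf { x | ∃ (m : ℕ) (p : Fin m → ℝ) (ψ : Fin m → (A × B) → ℂ),
    (∀ i, 0 < p i) ∧ (∀ i, IsUnit' (ψ i)) ∧
    ρ = ∑ i, (p i : ℂ) • pureMat (ψ i) ∧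
    x = ∑ i, p i * vnEntropy (ptr2 (pureMat (ψ i))) }

/-- The alternative conditional max-entropy
`H₀(A|B)_ρ = sup_σ log tr[ρ⁰ (1 ⊗ σ)]`, supremum over density operators `σ` on `B`. -/
def H0cond {A B : Type*} [Fintype A] [Fintype B] [DecidableEq A] [DecidableEq B]
    (ρ : Matrix (A × B) (A × B) ℂ) : ℝ :=
  sSup { x | ∃ σ : Matrix B B ℂ, IsDensity σ ∧
    x = Real.logb 2 ((suppProj ρ * ((1 : Matrix A A ℂ) ⊗ₖ σ)).trace.re) }

/-- Separability of a bipartite state. -/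
def IsSep {A B : Type*} [Fintype A] [Fintype B] (ρ : Matrix (A × B) (A × B) ℂ) : Prop :=
  ∃ (N : ℕ) (q : Fin N → ℝ) (α : Fin N → Matrix A A ℂ) (β : Fin N → Matrix B B ℂ),
    (∀ i, 0 ≤ q i) ∧ (∀ i, IsDensity (α i)) ∧ (∀ i, IsDensity (β i)) ∧
    ρ = ∑ i, (q i : ℂ) • (α i ⊗ₖ β i)

/-- `n`-fold tensor power of a matrix. -/
def tensorPow {X : Type*} (ρ : Matrix X X ℂ) (n : ℕ) :
    Matrix (Fin n → X) (Fin n → X) ℂ :=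
  Matrix.of fun f g => ∏ i, ρ (f i) (g i)



-- ### Auxiliary lemmas ###

open Set in
universe u_1 in
lemma myIsCompact_convexHull {E : Type u_1} [NormedAddCommGroup E] [NormedSpace ℝ E]
    [FiniteDimensional ℝ E] {T : Set E} (hT : IsCompact T) :
    IsCompact (convexHull ℝ T) := by
  classical
  rcases T.eq_empty_or_nonempty with rfl | ⟨t0, ht0⟩
  · simp only [convexHull_empty]; exact isCompact_empty
  set m := Module.finrank ℝ E + 1 with hm
  set g : (Fin m → ℝ) × (Fin m → E) → E := fun p => ∑ i, p.1 i • p.2 i with hg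
  have hgc : Continuous g := by
    apply continuous_finset_sum
    intro i _
    exact ((continuous_apply i).comp continuous_fst).smul
      ((continuous_apply i).comp continuous_snd)
  have hK : IsCompact ((stdSimplex ℝ (Fin m)) ×ˢ (Set.univ.pi fun _ : Fin m => T)) :=
    (isCompact_stdSimplex ℝ (Fin m)).prod (isCompact_univ_pi fun _ => hT)
  have himg : convexHull ℝ T
      = g '' ((stdSimplex ℝ (Fin m)) ×ˢ (Set.univ.pi fun _ : Fin m => T)) := by
    apply Subset.antisymm
    · intro x hx
      obtain ⟨ι, hι, z, w, hrange, hai, hpos, hsum, hx⟩ :=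
        eq_pos_convex_span_of_mem_convexHull hx
      have hne : Nonempty ι := by
        by_contra h
        rw [not_nonempty_iff] at h
        rw [Finset.sum_of_isEmpty] at hsum
        norm_num at hsum
      have hcard : Fintype.card ι ≤ m := by
        have h1 : Fintype.card ι = (Fintype.card ι - 1) + 1 :=
          (Nat.succ_pred_eq_of_pos Fintype.card_pos).symm
      -- finrank of vectorSpan = card - 1 ≤ finrank E
        have h2 := hai.finrank_vectorSpan h1
        have h3 : Module.finrank ℝ ↥(vectorSpan ℝ (Set.range z)) ≤ Module.finrank ℝ E :=
          Submodule.finrank_le _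
        omega
      obtain ⟨e⟩ := Function.Embedding.nonempty_of_card_le (Fintype.card_fin m ▸ hcard)
      set w' : Fin m → ℝ := fun j => if h : ∃ i, e i = j then w h.choose else 0 with hw'
      set v' : Fin m → E := fun j => if h : ∃ i, e i = j then z h.choose else t0 with hv'
      have hwe : ∀ i, w' (e i) = w i := by
        intro i
        have h : ∃ i', e i' = e i := ⟨i, rfl⟩
        have : h.choose = i := e.injective h.choose_spec
        simp [hw', dif_pos h, this]
      have hve : ∀ i, v' (e i) = z i := by
        intro i
        have h : ∃ i', e i' = e i := ⟨i, rfl⟩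
        have : h.choose = i := e.injective h.choose_spec
        simp [hv', dif_pos h, this]
      have hsum' : ∀ {γ : Type u_1} [AddCommMonoid γ] (φ : ℝ → E → γ), (∀ y, φ 0 y = 0) →
          ∑ j, φ (w' j) (v' j) = ∑ i, φ (w i) (z i) := by
        intro γ _ φ hφ0
        have step1 : ∑ j, φ (w' j) (v' j)
            = ∑ j ∈ Finset.image (fun i => e i) Finset.univ, φ (w' j) (v' j) := by
          refine (Finset.sum_subset (Finset.subset_univ _) ?_).symm
          intro j _ hj
          simp only [Finset.mem_image, Finset.mem_univ, true_and] at hj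
          have hne' : ¬ ∃ i, e i = j := hj
          simp [hw', dif_neg hne', hφ0]
        have step2 : ∑ j ∈ Finset.image (fun i => e i) Finset.univ, φ (w' j) (v' j)
            = ∑ i, φ (w' (e i)) (v' (e i)) :=
          Finset.sum_image (by intro a _ b _ h; exact e.injective h)
        rw [step1, step2]
        exact Finset.sum_congr rfl fun i _ => by rw [hwe, hve]
      have hsumw : ∑ j, w' j = ∑ i, w i := by
        have := hsum' (γ := ULift.{u_1} ℝ) (fun a _ => ULift.up a) (fun _ => rfl)
        have h2 : (AddEquiv.ulift (∑ j, ULift.up (w' j)) : ℝ)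
            = AddEquiv.ulift (∑ i, ULift.up (w i)) := by rw [this]
        rw [map_sum, map_sum] at h2; exact h2
      refine ⟨(w', v'), ⟨⟨fun j => ?_, ?_⟩, fun j _ => ?_⟩, ?_⟩
      · by_cases h : ∃ i, e i = j
        · simp only [hw', dif_pos h]; exact (hpos _).le
        · simp [hw', dif_neg h]
      · show ∑ j, w' j = 1
        exact hsumw.trans hsum
      · by_cases h : ∃ i, e i = j
        · simp only [hv', dif_pos h]; exact hrange (Set.mem_range_self _)
        · simpa [hv', dif_neg h] using ht0
      · show ∑ j, w' j • v' j = x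
        exact (hsum' (fun a y => a • y) (fun y => zero_smul ℝ y)).trans hx
    · rintro x ⟨⟨w, v⟩, ⟨hw, hv⟩, rfl⟩
      exact (convex_convexHull ℝ T).sum_mem (fun i _ => hw.1 i)
        hw.2 (fun i _ => subset_convexHull ℝ T (hv i (Set.mem_univ i)))
  rw [himg]
  exact hK.image hgc

-- sum helpers
lemma sum1 (m : ℕ) : 2 * ∑ b ∈ Finset.range m, (b+1) = m*(m+1) := by
  induction m with
  | zero => simp
  | succ k ih => rw [Finset.sum_range_succ, Nat.mul_add, ih]; ring

lemma sum2 (m : ℕ) : 6 * ∑ c ∈ Finset.range m, (∑ b ∈ Finset.range (c+1), (b+1))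
    = m*(m+1)*(m+2) := by
  induction m with
  | zero => simp
  | succ k ih =>
    rw [Finset.sum_range_succ, Nat.mul_add, ih]
    have h := sum1 (k+1)
    have : 6 * ∑ b ∈ Finset.range (k+1), (b+1) = 3 * (2 * ∑ b ∈ Finset.range (k+1), (b+1)) := by
      ring
    rw [this, h]; ring

def Q3 (n : ℕ) := {t : Fin (n+1) × Fin (n+1) × Fin (n+1) // t.1 ≤ t.2.1 ∧ t.2.1 ≤ t.2.2}

noncomputable instance (n : ℕ) : Fintype (Q3 n) := by unfold Q3; infer_instance

def q3equiv (n : ℕ) : Q3 n ≃ Σ c : Fin (n+1), Σ b : Fin (c.1+1), Fin (b.1+1) where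
  toFun t := ⟨t.1.2.2, ⟨t.1.2.1.1, by have h := t.2.2; rw [Fin.le_def] at h; omega⟩, ⟨t.1.1.1, by show t.1.1.1 < t.1.2.1.1 + 1; have h := t.2.1; rw [Fin.le_def] at h; omega⟩⟩
  invFun s := ⟨(⟨s.2.2.1, by omega⟩, ⟨s.2.1.1, by omega⟩, s.1),
    by constructor <;> · simp only [Fin.le_def]; omega⟩
  left_inv t := by
    apply Subtype.ext
    simp
  right_inv s := by
    rcases s with ⟨c, b, a⟩
    simp

lemma card_q3 (n : ℕ) : 6 * Fintype.card (Q3 n) = (n+1)*(n+2)*(n+3) := by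
  rw [Fintype.card_congr (q3equiv n)]
  rw [Fintype.card_sigma]
  conv_lhs => rw [Fin.sum_univ_eq_sum_range (fun c => Fintype.card (Σ b : Fin (c+1), Fin (b+1)))]
  have : ∀ c : ℕ, Fintype.card (Σ b : Fin (c+1), Fin (b+1)) = ∑ b ∈ Finset.range (c+1), (b+1) := by
    intro c
    rw [Fintype.card_sigma]
    rw [Fin.sum_univ_eq_sum_range (fun b => Fintype.card (Fin (b+1)))]
    simp
  simp_rw [this]
  have h := sum2 (n+1)
  ring_nf at h ⊢
  exact h
def cnt {n D : ℕ} (f : Fin n → Fin D) (j : Fin D) : ℕ :=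
  (Finset.univ.filter (fun i => f i ≤ j)).card

lemma cnt_le {n D : ℕ} (f : Fin n → Fin D) (j : Fin D) : cnt f j ≤ n := by
  have := Finset.card_filter_le (Finset.univ : Finset (Fin n)) (fun i => f i ≤ j)
  simpa [cnt] using this

lemma cnt_mono {n D : ℕ} (f : Fin n → Fin D) {j j' : Fin D} (h : j ≤ j') :
    cnt f j ≤ cnt f j' := by
  apply Finset.card_le_card
  intro i hi
  simp only [Finset.mem_filter, Finset.mem_univ, true_and] at hi ⊢
  exact le_trans hi h

lemma cnt_last {n D : ℕ} (hD : 0 < D) (f : Fin n → Fin D) : cnt f ⟨D-1, by omega⟩ = n := by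
  have : (Finset.univ.filter (fun i => f i ≤ (⟨D-1, by omega⟩ : Fin D))) = Finset.univ := by
    apply Finset.filter_true_of_mem
    intro i _
    rw [Fin.le_def]
    have := (f i).isLt
    simp only []
    omega
  simp [cnt, this]

lemma le_iff_lt_cnt {n D : ℕ} {f : Fin n → Fin D} (hf : Monotone f) (i : Fin n) (j : Fin D) :
    f i ≤ j ↔ (i : ℕ) < cnt f j := by
  simp only [cnt]
  constructor
  · intro h
    have hsub : Finset.Iic i ⊆ Finset.univ.filter (fun a => f a ≤ j) := by
      intro a ha
      simp only [Finset.mem_Iic] at ha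
      simp only [Finset.mem_filter, Finset.mem_univ, true_and]
      exact le_trans (hf ha) h
    have := Finset.card_le_card hsub
    rw [Fin.card_Iic] at this
    omega
  · intro h
    by_contra hc
    push_neg at hc
    have hsub : Finset.univ.filter (fun a => f a ≤ j) ⊆ Finset.Iio i := by
      intro a ha
      simp only [Finset.mem_filter, Finset.mem_univ, true_and] at ha
      simp only [Finset.mem_Iio]
      by_contra hai
      push_neg at hai
      exact absurd (le_trans (hf hai) ha) (not_le.mpr hc)
    have := Finset.card_le_card hsub
    rw [Fin.card_Iio] at this
    omega

lemma mono_eq_of_cnt_eq {n D : ℕ} {f g : Fin n → Fin D} (hf : Monotone f) (hg : Monotone g)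
    (h : ∀ j, cnt f j = cnt g j) : f = g := by
  funext i
  refine le_antisymm ?_ ?_
  · rw [le_iff_lt_cnt hf i (g i), h]
    exact (le_iff_lt_cnt hg i (g i)).mp le_rfl
  · rw [le_iff_lt_cnt hg i (f i), ← h]
    exact (le_iff_lt_cnt hf i (f i)).mp le_rfl

lemma mono_card_le (n D : ℕ) (hD : 4 ≤ D) :
    Fintype.card {f : Fin n → Fin D // Monotone f}
      ≤ Fintype.card (Q3 n) * (n+1)^(D-4) := by
  have h0 : (0:ℕ) < D := by omega
  set κ : {f : Fin n → Fin D // Monotone f} → (Q3 n) × (Fin (D-4) → Fin (n+1)) :=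
    fun f => (⟨(⟨cnt f.1 ⟨0, by omega⟩, by have := cnt_le f.1 ⟨0, by omega⟩; omega⟩,
                ⟨cnt f.1 ⟨1, by omega⟩, by have := cnt_le f.1 ⟨1, by omega⟩; omega⟩,
                ⟨cnt f.1 ⟨2, by omega⟩, by have := cnt_le f.1 ⟨2, by omega⟩; omega⟩),
        by
          constructor
          · show (⟨cnt f.1 ⟨0, by omega⟩, _⟩ : Fin (n+1)) ≤ ⟨cnt f.1 ⟨1, by omega⟩, _⟩
            rw [Fin.mk_le_mk]
            exact cnt_mono f.1 (by rw [Fin.mk_le_mk]; omega)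
          · show (⟨cnt f.1 ⟨1, by omega⟩, _⟩ : Fin (n+1)) ≤ ⟨cnt f.1 ⟨2, by omega⟩, _⟩
            rw [Fin.mk_le_mk]
            exact cnt_mono f.1 (by rw [Fin.mk_le_mk]; omega)⟩,
      fun k => ⟨cnt f.1 ⟨k.1 + 3, by omega⟩, by
        have := cnt_le f.1 ⟨k.1 + 3, by omega⟩; omega⟩) with hκ
  have hinj : Function.Injective κ := by
    intro f g hfg
    rw [hκ] at hfg
    rw [Prod.ext_iff] at hfg
    obtain ⟨h1, h2⟩ := hfg
    replace h1 := Subtype.ext_iff.mp h1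
    rw [Prod.ext_iff] at h1
    obtain ⟨h10, h1'⟩ := h1
    rw [Prod.ext_iff] at h1'
    obtain ⟨h11, h12⟩ := h1'
    simp only [Fin.mk.injEq] at h10 h11 h12
    have hcnt : ∀ j : Fin D, cnt f.1 j = cnt g.1 j := by
      intro j
      rcases j with ⟨jv, hj⟩
      rcases Nat.lt_or_ge jv 3 with h3 | h3
      · interval_cases jv
        · exact h10
        · exact h11
        · exact h12
      · rcases Nat.lt_or_ge jv (D-1) with hlt | hge
        · have hk : jv - 3 < D - 4 := by omega
          have := congrFun h2 ⟨jv - 3, hk⟩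
          rw [Fin.mk.injEq] at this
          have heq : jv - 3 + 3 = jv := by omega
          simpa [heq] using this
        · have hjv : jv = D - 1 := by omega
          subst hjv
          rw [cnt_last h0 f.1, cnt_last h0 g.1]
    exact Subtype.ext (mono_eq_of_cnt_eq f.2 g.2 hcnt)
  have := Fintype.card_le_of_injective κ hinj
  simpa [Fintype.card_prod, Fintype.card_fun] using this

lemma arith_bound' (a k S : ℕ) (ha2 : 2 ≤ a) (hb : 6*S ≤ a*(a+1)*(a+2)*a^k) :
    S*S*2+1 ≤ a^(2*k+6) := by
  have h3 : (a+1)*(a+2) ≤ 3*(a*a) := by nlinarith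
  have hsq : (6*S)*(6*S) ≤ (a*(a+1)*(a+2)*a^k)*(a*(a+1)*(a+2)*a^k) := Nat.mul_le_mul hb hb
  have h2 : (a*(a+1)*(a+2)*a^k)*(a*(a+1)*(a+2)*a^k)
      = (a*a)*(a^k*a^k)*(((a+1)*(a+2))*((a+1)*(a+2))) := by ring
  have h4 : (a*a)*(a^k*a^k)*(((a+1)*(a+2))*((a+1)*(a+2)))
      ≤ (a*a)*(a^k*a^k)*((3*(a*a))*(3*(a*a))) :=
    Nat.mul_le_mul_left _ (Nat.mul_le_mul h3 h3)
  have h5 : (a*a)*(a^k*a^k)*((3*(a*a))*(3*(a*a))) = 9*((a*a*a*a*a*a)*(a^k*a^k)) := by ring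
  have h6 : (6*S)*(6*S) = 36*(S*S) := by ring
  have hbig : 36*(S*S) ≤ 9*((a*a*a*a*a*a)*(a^k*a^k)) := by
    rw [← h6, ← h5]
    exact le_trans hsq (h2 ▸ h4)
  have hpow : a^(2*k+6) = (a*a*a*a*a*a)*(a^k*a^k) := by
    rw [← pow_add]
    ring
  have hge2 : 2 ≤ a^(2*k+6) := le_trans ha2 (Nat.le_self_pow (by omega) a)
  rw [hpow] at hge2 ⊢
  linarith

lemma arith_bound (n d S : ℕ) (hn1 : 1 ≤ n) (hd2 : 2 ≤ d)
    (h6S : 6*S ≤ (n+1)*(n+2)*(n+3)*(n+1)^(d*d-4)) :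
    S*S*2+1 ≤ (n+1)^(2*d^2-2) := by
  have hD4 : 4 ≤ d * d := by nlinarith
  have hb : 6 * S ≤ (n+1)*((n+1)+1)*((n+1)+2)*(n+1)^(d*d-4) := by
    have : (n+1)*((n+1)+1)*((n+1)+2) = (n+1)*(n+2)*(n+3) := by ring
    rw [this]
    exact h6S
  have h := arith_bound' (n+1) (d*d-4) S (by omega) hb
  have hexp : 2*d^2-2 = 2*(d*d-4)+6 := by
    have hdd : d^2 = d*d := pow_two d
    omega
  rw [hexp]
  exact h


open MeasureTheory in
/-- The de Finetti state `ζⁿ = ∫ ψ^{⊗n} dψ`, the average of `n`-fold tensor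
powers of pure states on `H_A ⊗ H_R ≅ ℂ^{d²}` with respect to the unitarily invariant measure,
is a convex combination of at most `(n+1)^{2d²−2}` tensor powers of pure states. -/
theorem deFinetti_finite_decomposition (d : ℕ) (hd : 0 < d) (n : ℕ)
    (μ : Measure (Fin (d * d) → ℂ)) [IsProbabilityMeasure μ]
    (hsupp : ∀ᵐ ψ ∂μ, IsUnit' ψ)
    (hinv : ∀ U : Matrix (Fin (d * d)) (Fin (d * d)) ℂ,
      U ∈ Matrix.unitaryGroup (Fin (d * d)) ℂ →
        Measure.map (fun ψ => U *ᵥ ψ) μ = μ)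
    (ζ : Matrix (Fin n → Fin (d * d)) (Fin n → Fin (d * d)) ℂ)
    (hζ : ∀ fg : (Fin n → Fin (d * d)) × (Fin n → Fin (d * d)),
      ζ fg.1 fg.2 = ∫ ψ, tensorPow (pureMat ψ) n fg.1 fg.2 ∂μ) :
    ∃ (N : ℕ) (p : Fin N → ℝ) (ω : Fin N → (Fin (d * d) → ℂ)),
      (N : ℝ) ≤ ((n : ℝ) + 1) ^ (2 * d ^ 2 - 2) ∧
      (∀ i, 0 ≤ p i) ∧ (∑ i, p i = 1) ∧ (∀ i, IsUnit' (ω i)) ∧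
      ζ = ∑ i, (p i : ℂ) • tensorPow (pureMat (ω i)) n := by
  classical
  have hDpos : 0 < d * d := Nat.mul_pos hd hd
  have hentry : ∀ (ψ : Fin (d*d) → ℂ) (f g : Fin n → Fin (d*d)),
      tensorPow (pureMat ψ) n f g = ∏ i, ψ (f i) * star (ψ (g i)) := by
    intro ψ f g; rfl
  have hle1 : ∀ ψ : Fin (d*d) → ℂ, IsUnit' ψ → ∀ z, ‖ψ z‖ ≤ 1 := by
    intro ψ hψ z
    have h2 : ‖ψ z‖ ^ 2 ≤ 1 := by
      rw [← hψ]
      exact Finset.single_le_sum (f := fun i => ‖ψ i‖ ^ 2) (fun i _ => by positivity)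
        (Finset.mem_univ z)
    nlinarith [norm_nonneg (ψ z)]
  by_cases hsp : n = 0 ∨ d = 1
  · -- degenerate cases : a single term suffices
    set ω0 : Fin (d*d) → ℂ := fun z => if z = ⟨0, hDpos⟩ then 1 else 0 with hω0
    have hunit : IsUnit' ω0 := by
      unfold ω0
      unfold IsUnit'
      have : ∀ z : Fin (d*d), ‖(if z = (⟨0, hDpos⟩ : Fin (d*d)) then (1:ℂ) else 0)‖ ^ 2
          = if z = (⟨0, hDpos⟩ : Fin (d*d)) then (1:ℝ) else 0 := by
        intro z; split <;> simp
      rw [Finset.sum_congr rfl fun z _ => this z]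
      simp
    have hone : ∀ f g : Fin n → Fin (d*d), tensorPow (pureMat ω0) n f g = 1 := by
      intro f g
      rw [hentry]
      rcases hsp with h0 | h1
      · subst h0; simp
      · apply Finset.prod_eq_one
        intro i _
        have hfz : ∀ z : Fin (d*d), z = ⟨0, hDpos⟩ := by
          intro z
          have hz := z.isLt
          apply Fin.ext
          show z.val = 0
          subst h1
          omega
        rw [hω0]
        simp [hfz (f i), hfz (g i)]
    have hζone : ∀ f g : Fin n → Fin (d*d), ζ f g = 1 := by
      intro f g
      rw [hζ (f, g)]
      have hae : ∀ᵐ ψ ∂μ, tensorPow (pureMat ψ) n f g = 1 := by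
        filter_upwards [hsupp] with ψ hψ
        rw [hentry]
        rcases hsp with h0 | h1
        · subst h0; simp
        · apply Finset.prod_eq_one
          intro i _
          have hfz : ∀ z : Fin (d*d), z = ⟨0, hDpos⟩ := by
            intro z
            have hz := z.isLt
            apply Fin.ext
            show z.val = 0
            subst h1
            omega
          rw [hfz (f i), hfz (g i)]
          have h1' : ‖ψ ⟨0, hDpos⟩‖ ^ 2 = 1 := by
            have hs := hψ
            unfold IsUnit' at hs
            rw [Finset.sum_eq_single (⟨0, hDpos⟩ : Fin (d*d))] at hs
            · exact hs
            · intro b _ hb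
              exact absurd (hfz b) hb
            · intro hb
              exact absurd (Finset.mem_univ _) hb
          have hm := Complex.mul_conj (ψ ⟨0, hDpos⟩)
          rw [Complex.normSq_eq_norm_sq, h1'] at hm
          simpa using hm
      calc (∫ ψ, tensorPow (pureMat ψ) n f g ∂μ) = ∫ _, (1:ℂ) ∂μ := integral_congr_ae hae
        _ = 1 := by simp
    refine ⟨1, fun _ => 1, fun _ => ω0, ?_, fun _ => zero_le_one, by simp, fun _ => hunit, ?_⟩
    · simp only [Nat.cast_one]
      apply one_le_pow₀
      have : (0:ℝ) ≤ (n:ℝ) := Nat.cast_nonneg n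
      linarith
    · ext f g
      rw [hζone f g]
      simp [Matrix.sum_apply, hone f g]
  · -- main case
    push_neg at hsp
    obtain ⟨hn0, hd1⟩ := hsp
    have hn1 : 1 ≤ n := Nat.pos_of_ne_zero hn0
    have hd2 : 2 ≤ d := by omega
    have hD4 : 4 ≤ d * d := by nlinarith
    set F : (Fin (d*d) → ℂ) → ((Fin n → Fin (d*d)) × (Fin n → Fin (d*d)) → ℂ) :=
      fun ψ fg => tensorPow (pureMat ψ) n fg.1 fg.2 with hF
    set U : Set (Fin (d*d) → ℂ) := {ψ | IsUnit' ψ} with hU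
    set T : Set ((Fin n → Fin (d*d)) × (Fin n → Fin (d*d)) → ℂ) := F '' U with hT
    have hFcont : Continuous F := by
      apply continuous_pi
      intro fg
      have : (fun ψ : Fin (d*d) → ℂ => F ψ fg)
          = fun ψ => ∏ i, ψ (fg.1 i) * star (ψ (fg.2 i)) := by
        funext ψ; rw [hF]; exact hentry ψ fg.1 fg.2
      rw [this]
      exact continuous_finset_prod _ fun i _ =>
        (continuous_apply (fg.1 i)).mul (continuous_apply (fg.2 i)).star
    have hUcomp : IsCompact U := by
      have hclosed : IsClosed U := by
        have : U = (fun ψ : Fin (d*d) → ℂ => ∑ z, ‖ψ z‖ ^ 2) ⁻¹' {1} := rfl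
        rw [this]
        apply IsClosed.preimage _ isClosed_singleton
        exact continuous_finset_sum _ fun z _ => ((continuous_apply z).norm.pow 2)
      have hb : Bornology.IsBounded U := by
        apply Bornology.IsBounded.subset (Metric.isBounded_closedBall (x := 0) (r := 1))
        intro ψ hψ
        simp only [Metric.mem_closedBall, dist_zero_right]
        rw [pi_norm_le_iff_of_nonneg zero_le_one]
        exact fun z => hle1 ψ hψ z
      exact Metric.isCompact_of_isClosed_isBounded hclosed hb
    have hTcomp : IsCompact T := hUcomp.image hFcont
    have hCH : IsCompact (convexHull ℝ T) := myIsCompact_convexHull hTcomp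
    have hFint : Integrable F μ := by
      apply Integrable.mono' (integrable_const (1:ℝ)) hFcont.aestronglyMeasurable
      filter_upwards [hsupp] with ψ hψ
      rw [pi_norm_le_iff_of_nonneg zero_le_one]
      intro fg
      rw [hF]
      show ‖tensorPow (pureMat ψ) n fg.1 fg.2‖ ≤ 1
      rw [hentry, norm_prod]
      apply Finset.prod_le_one (fun i _ => norm_nonneg _)
      intro i _
      rw [norm_mul, norm_star]
      exact mul_le_one₀ (hle1 ψ hψ _) (norm_nonneg _) (hle1 ψ hψ _)
    have hζ' : (fun fg : (Fin n → Fin (d*d)) × (Fin n → Fin (d*d)) => ζ fg.1 fg.2) = ∫ ψ, F ψ ∂μ := by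
      funext fg
      rw [hζ fg]
      have := (ContinuousLinearMap.proj (R := ℝ) (φ := fun _ : (Fin n → Fin (d*d)) × (Fin n → Fin (d*d)) => ℂ) fg).integral_comp_comm
        hFint
      simp only [ContinuousLinearMap.proj_apply] at this
      exact this
    have hmem : (fun fg : (Fin n → Fin (d*d)) × (Fin n → Fin (d*d)) => ζ fg.1 fg.2) ∈ convexHull ℝ T := by
      rw [hζ']
      apply Convex.integral_mem (convex_convexHull ℝ T) hCH.isClosed _ hFint
      filter_upwards [hsupp] with ψ hψ
      exact subset_convexHull ℝ T ⟨ψ, hψ, rfl⟩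
    obtain ⟨ι, hι, z, w, hrange, hai, hpos, hsum1, hrep⟩ :=
      eq_pos_convex_span_of_mem_convexHull hmem
    -- the submodule of permutation-invariant functions
    set W : Submodule ℝ ((Fin n → Fin (d*d)) × (Fin n → Fin (d*d)) → ℂ) :=
      { carrier := {M : (Fin n → Fin (d*d)) × (Fin n → Fin (d*d)) → ℂ | ∀ (f g : Fin n → Fin (d*d)) (σ τ : Equiv.Perm (Fin n)), M (f ∘ σ, g ∘ τ) = M (f, g)}
        add_mem' := fun {a b} ha hb => by
          intro f g σ τ
          show a (f ∘ σ, g ∘ τ) + b (f ∘ σ, g ∘ τ) = a (f, g) + b (f, g)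
          rw [ha f g σ τ, hb f g σ τ]
        zero_mem' := fun f g σ τ => rfl
        smul_mem' := fun c M hM => by
          intro f g σ τ
          show c • M (f ∘ σ, g ∘ τ) = c • M (f, g)
          rw [hM f g σ τ] } with hW
    have hTW : ∀ x ∈ T, x ∈ W := by
      rintro x ⟨ψ, hψ, rfl⟩ f g σ τ
      show F ψ (f ∘ σ, g ∘ τ) = F ψ (f, g)
      rw [hF]
      show tensorPow (pureMat ψ) n (f ∘ σ) (g ∘ τ) = tensorPow (pureMat ψ) n f g
      rw [hentry, hentry]
      calc ∏ i, ψ ((f ∘ σ) i) * star (ψ ((g ∘ τ) i))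
          = (∏ i, ψ (f (σ i))) * ∏ i, star (ψ (g (τ i))) := Finset.prod_mul_distrib
        _ = (∏ i, ψ (f i)) * ∏ i, star (ψ (g i)) := by
            rw [Equiv.prod_comp σ (fun i => ψ (f i)), Equiv.prod_comp τ (fun i => star (ψ (g i)))]
        _ = ∏ i, ψ (f i) * star (ψ (g i)) := Finset.prod_mul_distrib.symm
    have hvs : vectorSpan ℝ (Set.range z) ≤ W := by
      rw [vectorSpan_def]
      apply Submodule.span_le.mpr
      rintro x hx
      rw [Set.mem_vsub] at hx
      obtain ⟨a, ha, b, hb, rfl⟩ := hx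
      have : a -ᵥ b = a - b := rfl
      rw [this]
      exact W.sub_mem (hTW a (hrange ha)) (hTW b (hrange hb))
    -- bound the number of points
    set Mono : Type := {f : Fin n → Fin (d*d) // Monotone f} with hMono
    set S : ℕ := Fintype.card Mono with hS
    have hne : Nonempty ι := by
      by_contra h
      rw [not_nonempty_iff] at h
      rw [Finset.sum_of_isEmpty] at hsum1
      norm_num at hsum1
    have hcard1 : Fintype.card ι = Module.finrank ℝ (vectorSpan ℝ (Set.range z)) + 1 := by
      have h1 : Fintype.card ι = (Fintype.card ι - 1) + 1 :=
        (Nat.succ_pred_eq_of_pos Fintype.card_pos).symm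
      have h2 := hai.finrank_vectorSpan h1
      omega
    have hfrW : Module.finrank ℝ W ≤ S * S * 2 := by
      set R : ((Fin n → Fin (d*d)) × (Fin n → Fin (d*d)) → ℂ) →ₗ[ℝ] ((Mono × Mono) → ℂ) :=
        LinearMap.funLeft ℝ ℂ (fun p : Mono × Mono => (p.1.1, p.2.1)) with hR
      have hinj : Function.Injective (R.comp W.subtype) := by
        rw [← LinearMap.ker_eq_bot, LinearMap.ker_eq_bot']
        rintro ⟨M, hM⟩ h0
        apply Subtype.ext
        funext fg
        obtain ⟨f, g⟩ := fg
        have hmf : Monotone (f ∘ Tuple.sort f) := Tuple.monotone_sort f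
        have hmg : Monotone (g ∘ Tuple.sort g) := Tuple.monotone_sort g
        have h1 : M (f ∘ Tuple.sort f, g ∘ Tuple.sort g) = M (f, g) :=
          hM f g (Tuple.sort f) (Tuple.sort g)
        have h2 : M (f ∘ Tuple.sort f, g ∘ Tuple.sort g) = 0 := by
          have h3 := congrFun h0 (⟨f ∘ Tuple.sort f, hmf⟩, ⟨g ∘ Tuple.sort g, hmg⟩)
          simpa [hR, LinearMap.funLeft] using h3
        show M (f, g) = 0
        rw [← h1, h2]
      calc Module.finrank ℝ W ≤ Module.finrank ℝ ((Mono × Mono) → ℂ) :=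
            LinearMap.finrank_le_finrank_of_injective hinj
        _ = S * S * 2 := by
            rw [Module.finrank_pi_fintype, Finset.sum_const, Complex.finrank_real_complex]
            simp [Fintype.card_prod, smul_eq_mul, hS]
    have hNle : Fintype.card ι ≤ S * S * 2 + 1 := by
      have := Submodule.finrank_mono hvs
      omega
    -- arithmetic : S*S*2+1 ≤ (n+1)^(2*d^2-2)
    have h6S : 6 * S ≤ (n+1)*(n+2)*(n+3)*(n+1)^(d*d-4) := by
      have h1 := mono_card_le n (d*d) hD4
      have h2 := card_q3 n
      calc 6 * S ≤ 6 * (Fintype.card (Q3 n) * (n+1)^(d*d-4)) := by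
            apply Nat.mul_le_mul_left
            simpa [hS, hMono] using h1
        _ = (6 * Fintype.card (Q3 n)) * (n+1)^(d*d-4) := by ring
        _ = (n+1)*(n+2)*(n+3)*(n+1)^(d*d-4) := by rw [h2]
    have hfinal : S * S * 2 + 1 ≤ (n+1)^(2*d^2-2) := arith_bound n d S hn1 hd2 h6S
    -- assemble the decomposition
    set N : ℕ := Fintype.card ι with hN
    set e : Fin N ≃ ι := (Fintype.equivFin ι).symm with he
    have hmemT : ∀ i : Fin N, z (e i) ∈ T := fun i => hrange (Set.mem_range_self _)
    set ω : Fin N → (Fin (d*d) → ℂ) := fun i => (hmemT i).choose with hω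
    have hωspec : ∀ i, IsUnit' (ω i) ∧ F (ω i) = z (e i) := by
      intro i
      have := (hmemT i).choose_spec
      exact ⟨this.1, this.2⟩
    refine ⟨N, fun i => w (e i), ω, ?_, fun i => (hpos _).le, ?_, fun i => (hωspec i).1, ?_⟩
    · calc (N : ℝ) ≤ ((S*S*2+1 : ℕ) : ℝ) := by
            exact_mod_cast hNle
        _ ≤ (((n+1)^(2*d^2-2) : ℕ) : ℝ) := by exact_mod_cast hfinal
        _ = ((n:ℝ)+1)^(2*d^2-2) := by push_cast; ring
    · rw [← hsum1]
      exact Equiv.sum_comp e w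
    · have hrep' : (fun fg : (Fin n → Fin (d*d)) × (Fin n → Fin (d*d)) => ζ fg.1 fg.2) = ∑ i : Fin N, w (e i) • F (ω i) := by
        rw [← hrep, ← Equiv.sum_comp e (fun j => w j • z j)]
        apply Finset.sum_congr rfl
        intro i _
        rw [(hωspec i).2]
      ext f g
      have := congrFun hrep' (f, g)
      simp only [] at this
      rw [this]
      rw [Finset.sum_apply]
      rw [Matrix.sum_apply]
      apply Finset.sum_congr rfl
      intro i _
      rw [Matrix.smul_apply, Pi.smul_apply]
      show w (e i) • (F (ω i) (f, g)) = (w (e i) : ℂ) • tensorPow (pureMat (ω i)) n f g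
      rw [hF]
      simp [Complex.real_smul]

end
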